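/- arXiv:1401.7183 — 2 statements merged into one kernel-verified Lean document; each statement's English description precedes it below -/
import Mathlib

section
/- For every fixed integer i ≥ 1, the limit as k → ∞ of ᾱ({1, 2i, k}) equals i/(2i+1). -/
open Filter

/-- The upper density of a set of integers. -/
noncomputable def density (A : Set ℤ) : ℝ :=
  Filter.limsup
    (fun N : ℕ => ((A ∩ Set.Icc (-(N : ℤ)) (N : ℤ)).ncard : ℝ) / (2 * (N : ℝ) + 1))
    Filter.atTop

/-- A set of integers is independent in the distance graph `G(S)` if no two distinct
elements differ by an element of `S`. -/
def IsIndepSet (S : Finset ℕ) (A : Set ℤ) : Prop :=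
  ∀ a ∈ A, ∀ b ∈ A, a ≠ b → (a - b).natAbs ∉ S

/-- The independence ratio of the distance graph `G(S)`. -/
noncomputable def indRatio (S : Finset ℕ) : ℝ :=
  sSup (density '' {A : Set ℤ | IsIndepSet S A})

/-! ### Arithmetic core lemmas -/

lemma parity_core (i : ℕ) (hi : 1 ≤ i) (a b E : ℤ)
    (hb : b ≤ (i:ℤ) - 1) (hb' : -((i:ℤ) - 1) ≤ b)
    (hE : E = (2*(i:ℤ)+1)*a + 2*b)
    (hEval : E = 0 ∨ E = 1 ∨ E = -1 ∨ E = 2*(i:ℤ) ∨ E = -(2*(i:ℤ))) :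
    E = 0 ∧ a = 0 ∧ b = 0 := by
  have hi' : (1:ℤ) ≤ (i:ℤ) := by exact_mod_cast hi
  have ha1 : a ≤ 1 := by
    by_contra h
    push_neg at h
    have h2 : (2:ℤ) ≤ a := h
    have : (2*(i:ℤ)+1)*2 ≤ (2*(i:ℤ)+1)*a := mul_le_mul_of_nonneg_left h2 (by linarith)
    rcases hEval with h|h|h|h|h <;> linarith
  have ha2 : -1 ≤ a := by
    by_contra h
    push_neg at h
    have h2 : a ≤ -2 := by omega
    have : (2*(i:ℤ)+1)*a ≤ (2*(i:ℤ)+1)*(-2) := mul_le_mul_of_nonneg_left h2 (by linarith)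
    rcases hEval with h|h|h|h|h <;> linarith
  have ha : a = -1 ∨ a = 0 ∨ a = 1 := by omega
  rcases ha with rfl | rfl | rfl <;> rcases hEval with h|h|h|h|h <;>
    simp only [mul_neg_one, mul_zero, mul_one] at hE <;> omega

lemma key_cases (i J k : ℕ) (hi : 1 ≤ i) (hJ : 1 ≤ J)
    (hk : (2*i+1)*J + 2*i ≤ k)
    (q q' j j' s s' : ℤ)
    (hj0 : 0 ≤ j) (hj1 : j ≤ (J:ℤ) - 1) (hj0' : 0 ≤ j') (hj1' : j' ≤ (J:ℤ) - 1)
    (hs0 : 0 ≤ s) (hs1 : s ≤ (i:ℤ) - 1) (hs0' : 0 ≤ s') (hs1' : s' ≤ (i:ℤ) - 1)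
    (d : ℤ)
    (hd : ((k:ℤ)+1)*q + (2*(i:ℤ)+1)*j + 2*s - (((k:ℤ)+1)*q' + (2*(i:ℤ)+1)*j' + 2*s') = d) :
    (d = 0 → q = q' ∧ j = j' ∧ s = s') ∧
    ((d = 1 ∨ d = -1 ∨ d = 2*(i:ℤ) ∨ d = -(2*(i:ℤ)) ∨ d = (k:ℤ) ∨ d = -(k:ℤ)) → False) := by
  have hi' : (1:ℤ) ≤ (i:ℤ) := by exact_mod_cast hi
  have hJ' : (1:ℤ) ≤ (J:ℤ) := by exact_mod_cast hJ
  have hkZ : (2*(i:ℤ)+1)*(J:ℤ) + 2*(i:ℤ) ≤ (k:ℤ) := by exact_mod_cast hk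
  set E : ℤ := (2*(i:ℤ)+1)*(j - j') + 2*(s - s') with hEdef
  obtain ⟨c, hcq⟩ : ∃ c : ℤ, q - q' = c := ⟨q - q', rfl⟩
  have hE : ((k:ℤ)+1)*c + E = d := by rw [← hcq]; linear_combination hd
  have hmul1 : (2*(i:ℤ)+1)*(j - j') ≤ (2*(i:ℤ)+1)*((J:ℤ)-1) :=
    mul_le_mul_of_nonneg_left (by omega) (by linarith)
  have hmul2 : (2*(i:ℤ)+1)*(-((J:ℤ)-1)) ≤ (2*(i:ℤ)+1)*(j - j') :=
    mul_le_mul_of_nonneg_left (by omega) (by linarith)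
  have hexp1 : (2*(i:ℤ)+1)*((J:ℤ)-1) = (2*(i:ℤ)+1)*(J:ℤ) - (2*(i:ℤ)+1) := by ring
  have hexp2 : (2*(i:ℤ)+1)*(-((J:ℤ)-1)) = -((2*(i:ℤ)+1)*(J:ℤ)) + (2*(i:ℤ)+1) := by ring
  have hEub : E ≤ (k:ℤ) - 2*(i:ℤ) - 3 := by rw [hEdef]; linarith
  have hElb : -((k:ℤ) - 2*(i:ℤ) - 3) ≤ E := by rw [hEdef]; linarith
  have hpc : ∀ _ : (E = 0 ∨ E = 1 ∨ E = -1 ∨ E = 2*(i:ℤ) ∨ E = -(2*(i:ℤ))),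
      E = 0 ∧ j - j' = 0 ∧ s - s' = 0 := fun h =>
    parity_core i hi (j - j') (s - s') E (by omega) (by omega) (by rw [hEdef]) h
  have hcval : ∀ _ : -(k:ℤ) ≤ d ∧ d ≤ (k:ℤ), c = -1 ∨ c = 0 ∨ c = 1 := by
    rintro ⟨hd1, hd2⟩
    have hc1 : c ≤ 1 := by
      by_contra h
      push_neg at h
      have : ((k:ℤ)+1)*2 ≤ ((k:ℤ)+1)*c := mul_le_mul_of_nonneg_left (by omega) (by linarith)
      linarith
    have hc2 : -1 ≤ c := by
      by_contra h
      push_neg at h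
      have : ((k:ℤ)+1)*c ≤ ((k:ℤ)+1)*(-2) := mul_le_mul_of_nonneg_left (by omega) (by linarith)
      linarith
    omega
  constructor
  · rintro rfl
    have hc := hcval ⟨by linarith, by linarith⟩
    rcases hc with rfl | rfl | rfl
    · exfalso; simp only [mul_neg_one] at hE; omega
    · simp only [mul_zero] at hE
      obtain ⟨hE0, ha0, hb0⟩ := hpc (by omega)
      exact ⟨by omega, by omega, by omega⟩
    · exfalso; simp only [mul_one] at hE; omega
  · intro hd6
    have hdabs : -(k:ℤ) ≤ d ∧ d ≤ (k:ℤ) := by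
      rcases hd6 with rfl|rfl|rfl|rfl|rfl|rfl <;> omega
    have hc := hcval hdabs
    rcases hc with rfl | rfl | rfl <;>
      rcases hd6 with rfl|rfl|rfl|rfl|rfl|rfl <;>
      simp only [mul_neg_one, mul_zero, mul_one] at hE <;>
      first
        | omega
        | (obtain ⟨hE0, ha0, hb0⟩ := hpc (by omega); omega)

/-! ### Counting upper bounds -/

lemma ncard_Ico_int (a b : ℤ) : (Set.Ico a b).ncard = (b - a).toNat := by
  rw [← Finset.coe_Ico, Set.ncard_coe_finset, Int.card_Ico]

lemma ncard_Icc_int (a b : ℤ) : (Set.Icc a b).ncard = (b + 1 - a).toNat := by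
  rw [← Finset.coe_Icc, Set.ncard_coe_finset, Int.card_Icc]

lemma path_bound (A : Set ℤ) (h1 : ∀ a ∈ A, ∀ b ∈ A, a - b ≠ 1) (x : ℤ) (m : ℕ) :
    (A ∩ Set.Ico x (x + 2*m)).ncard ≤ m := by
  have key : (A ∩ Set.Ico x (x + 2*m)).ncard ≤ (Set.Ico (0:ℤ) m).ncard := by
    apply Set.ncard_le_ncard_of_injOn (fun a => (a - x) / 2)
    · rintro a ⟨-, ha2⟩
      simp only [Set.mem_Ico] at ha2 ⊢
      omega
    · rintro a ⟨haA, ha2⟩ b ⟨hbA, hb2⟩ hab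
      simp only [Set.mem_Ico] at ha2 hb2
      simp only at hab
      have h3 : a - b = 1 ∨ b - a = 1 ∨ a = b := by omega
      rcases h3 with h | h | h
      · exact absurd h (h1 a haA b hbA)
      · exact absurd h (h1 b hbA a haA)
      · exact h
  rw [ncard_Ico_int] at key
  omega

lemma block_bound (i : ℕ) (hi : 1 ≤ i) (A : Set ℤ)
    (h1 : ∀ a ∈ A, ∀ b ∈ A, a - b ≠ 1)
    (h2 : ∀ a ∈ A, ∀ b ∈ A, a - b ≠ 2*(i:ℤ)) (x : ℤ) :
    (A ∩ Set.Ico x (x + (2*(i:ℤ)+1))).ncard ≤ i := by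
  by_cases hx : x ∈ A
  · have hsub : A ∩ Set.Ico x (x + (2*(i:ℤ)+1)) ⊆
        insert x (A ∩ Set.Ico (x+2) (x + 2 + 2*((i:ℤ)-1))) := by
      rintro a ⟨haA, ha2⟩
      simp only [Set.mem_Ico] at ha2
      by_cases hax : a = x
      · rw [hax]; exact Set.mem_insert _ _
      · apply Set.mem_insert_of_mem
        refine ⟨haA, ?_⟩
        simp only [Set.mem_Ico]
        have hne1 : a - x ≠ 1 := h1 a haA x hx
        have hne2 : a - x ≠ 2*(i:ℤ) := h2 a haA x hx
        omega
    have hfin : (A ∩ Set.Ico (x+2) (x + 2 + 2*((i:ℤ)-1))).Finite :=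
      Set.Finite.inter_of_right (Set.finite_Ico _ _) _
    calc (A ∩ Set.Ico x (x + (2*(i:ℤ)+1))).ncard
        ≤ (insert x (A ∩ Set.Ico (x+2) (x + 2 + 2*((i:ℤ)-1)))).ncard :=
          Set.ncard_le_ncard hsub (hfin.insert x)
      _ ≤ (A ∩ Set.Ico (x+2) (x + 2 + 2*((i:ℤ)-1))).ncard + 1 := Set.ncard_insert_le _ _
      _ ≤ (i - 1) + 1 := by
          have := path_bound A h1 (x+2) (i-1)
          have hcast : (((i:ℕ) - 1 : ℕ) : ℤ) = (i:ℤ) - 1 := by omega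
          rw [hcast] at this
          omega
      _ = i := by omega
  · have hsub : A ∩ Set.Ico x (x + (2*(i:ℤ)+1)) ⊆ A ∩ Set.Ico (x+1) (x + 1 + 2*(i:ℤ)) := by
      rintro a ⟨haA, ha2⟩
      simp only [Set.mem_Ico] at ha2
      have : a ≠ x := fun h => hx (h ▸ haA)
      exact ⟨haA, by simp only [Set.mem_Ico]; omega⟩
    calc (A ∩ Set.Ico x (x + (2*(i:ℤ)+1))).ncard
        ≤ (A ∩ Set.Ico (x+1) (x + 1 + 2*(i:ℤ))).ncard :=
          Set.ncard_le_ncard hsub (Set.Finite.inter_of_right (Set.finite_Ico _ _) _)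
      _ ≤ i := path_bound A h1 (x+1) i

lemma blocks_bound (i : ℕ) (hi : 1 ≤ i) (A : Set ℤ)
    (h1 : ∀ a ∈ A, ∀ b ∈ A, a - b ≠ 1)
    (h2 : ∀ a ∈ A, ∀ b ∈ A, a - b ≠ 2*(i:ℤ)) (x : ℤ) (B : ℕ) :
    (A ∩ Set.Ico x (x + (2*(i:ℤ)+1)*B)).ncard ≤ i*B := by
  induction B with
  | zero => simp
  | succ B ih =>
    have hsplit : Set.Ico x (x + (2*(i:ℤ)+1)*(B+1)) =
        Set.Ico x (x + (2*(i:ℤ)+1)*B) ∪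
        Set.Ico (x + (2*(i:ℤ)+1)*B) ((x + (2*(i:ℤ)+1)*B) + (2*(i:ℤ)+1)) := by
      rw [Set.Ico_union_Ico_eq_Ico (le_add_of_nonneg_right (by positivity)) (by linarith)]
      congr 1
      push_cast
      ring
    push_cast
    rw [hsplit, Set.inter_union_distrib_left]
    calc _ ≤ (A ∩ Set.Ico x (x + (2*(i:ℤ)+1)*B)).ncard +
        (A ∩ Set.Ico (x + (2*(i:ℤ)+1)*B) ((x + (2*(i:ℤ)+1)*B) + (2*(i:ℤ)+1))).ncard :=
          Set.ncard_union_le _ _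
      _ ≤ i*B + i := Nat.add_le_add ih (block_bound i hi A h1 h2 _)
      _ = i*(B+1) := by ring

lemma upper_count (i : ℕ) (hi : 1 ≤ i) (A : Set ℤ)
    (h1 : ∀ a ∈ A, ∀ b ∈ A, a - b ≠ 1)
    (h2 : ∀ a ∈ A, ∀ b ∈ A, a - b ≠ 2*(i:ℤ)) (N : ℕ) :
    (A ∩ Set.Icc (-(N:ℤ)) (N:ℤ)).ncard ≤ i * (2*N/(2*i+1) + 1) := by
  set B : ℕ := 2*N/(2*i+1) + 1 with hB
  have hcov : (2*N+1 : ℕ) ≤ (2*i+1)*B := by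
    have hd := Nat.div_add_mod (2*N) (2*i+1)
    have hm : (2*N) % (2*i+1) < 2*i+1 := Nat.mod_lt _ (by omega)
    have : (2*i+1)*B = (2*i+1)*(2*N/(2*i+1)) + (2*i+1) := by rw [hB]; ring
    omega
  have hsub : A ∩ Set.Icc (-(N:ℤ)) (N:ℤ) ⊆ A ∩ Set.Ico (-(N:ℤ)) (-(N:ℤ) + (2*(i:ℤ)+1)*B) := by
    rintro a ⟨haA, ha2⟩
    simp only [Set.mem_Icc] at ha2
    refine ⟨haA, ?_⟩
    simp only [Set.mem_Ico]
    have : (2*(N:ℤ)+1) ≤ (2*(i:ℤ)+1)*(B:ℤ) := by exact_mod_cast hcov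
    constructor <;> linarith [ha2.1, ha2.2]
  calc (A ∩ Set.Icc (-(N:ℤ)) (N:ℤ)).ncard
      ≤ (A ∩ Set.Ico (-(N:ℤ)) (-(N:ℤ) + (2*(i:ℤ)+1)*B)).ncard :=
        Set.ncard_le_ncard hsub (Set.Finite.inter_of_right (Set.finite_Ico _ _) _)
    _ ≤ i*B := blocks_bound i hi A h1 h2 _ B

/-! ### Limit helpers -/

lemma tendsto_2N1 : Filter.Tendsto (fun N : ℕ => 2*(N:ℝ)+1) Filter.atTop Filter.atTop :=
  Filter.tendsto_atTop_add_const_right _ 1 ((tendsto_natCast_atTop_atTop).const_mul_atTop two_pos)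

lemma tendsto_err (C : ℝ) :
    Filter.Tendsto (fun N : ℕ => C / (2*(N:ℝ)+1)) Filter.atTop (nhds 0) :=
  Filter.Tendsto.div_atTop tendsto_const_nhds tendsto_2N1

lemma density_f_nonneg (A : Set ℤ) (N : ℕ) :
    0 ≤ ((A ∩ Set.Icc (-(N : ℤ)) (N : ℤ)).ncard : ℝ) / (2 * (N : ℝ) + 1) := by positivity

lemma density_f_le_one (A : Set ℤ) (N : ℕ) :
    ((A ∩ Set.Icc (-(N : ℤ)) (N : ℤ)).ncard : ℝ) / (2 * (N : ℝ) + 1) ≤ 1 := by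
  rw [div_le_one (by positivity)]
  have h1 : (A ∩ Set.Icc (-(N : ℤ)) (N : ℤ)).ncard ≤ (Set.Icc (-(N : ℤ)) (N : ℤ)).ncard :=
    Set.ncard_le_ncard Set.inter_subset_right (Set.finite_Icc _ _)
  rw [ncard_Icc_int] at h1
  have h2 : ((N:ℤ) + 1 - (-(N:ℤ))).toNat = 2*N+1 := by omega
  rw [h2] at h1
  have : ((A ∩ Set.Icc (-(N : ℤ)) (N : ℤ)).ncard : ℝ) ≤ ((2*N+1 : ℕ) : ℝ) := by
    exact_mod_cast h1
  push_cast at this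
  linarith

/-! ### Density upper bound -/

lemma density_upper (i : ℕ) (hi : 1 ≤ i) (A : Set ℤ)
    (h1 : ∀ a ∈ A, ∀ b ∈ A, a - b ≠ 1)
    (h2 : ∀ a ∈ A, ∀ b ∈ A, a - b ≠ 2*(i:ℤ)) :
    density A ≤ (i:ℝ) / (2*(i:ℝ)+1) := by
  set g : ℕ → ℝ := fun N => (i:ℝ)/(2*(i:ℝ)+1) + ((2*(i:ℝ)^2)/(2*(i:ℝ)+1)) / (2*(N:ℝ)+1)
    with hg
  have hi' : (1:ℝ) ≤ (i:ℝ) := by exact_mod_cast hi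
  have hgl : Filter.Tendsto g Filter.atTop (nhds ((i:ℝ)/(2*(i:ℝ)+1))) := by
    have := (tendsto_err ((2*(i:ℝ)^2)/(2*(i:ℝ)+1))).const_add ((i:ℝ)/(2*(i:ℝ)+1))
    simpa using this
  have hle : ∀ N : ℕ, ((A ∩ Set.Icc (-(N : ℤ)) (N : ℤ)).ncard : ℝ) / (2 * (N : ℝ) + 1) ≤ g N := by
    intro N
    have hc := upper_count i hi A h1 h2 N
    have hc' : ((A ∩ Set.Icc (-(N : ℤ)) (N : ℤ)).ncard : ℝ) ≤ (i:ℝ) * ((2*N/(2*i+1) : ℕ) + 1) := by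
      exact_mod_cast hc
    have hdivle : ((2*N/(2*i+1) : ℕ) : ℝ) ≤ (2*(N:ℝ))/(2*(i:ℝ)+1) := by
      calc ((2*N/(2*i+1) : ℕ) : ℝ) ≤ ((2*N : ℕ):ℝ)/((2*i+1 : ℕ):ℝ) := Nat.cast_div_le
        _ = (2*(N:ℝ))/(2*(i:ℝ)+1) := by push_cast; ring
    have hnum : ((A ∩ Set.Icc (-(N : ℤ)) (N : ℤ)).ncard : ℝ) ≤
        (i:ℝ) * ((2*(N:ℝ))/(2*(i:ℝ)+1) + 1) := by
      refine hc'.trans ?_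
      have : (0:ℝ) ≤ (i:ℝ) := by linarith
      nlinarith [hdivle]
    rw [hg]
    have heq : ((i:ℝ) * ((2*(N:ℝ))/(2*(i:ℝ)+1) + 1)) / (2*(N:ℝ)+1)
        = (i:ℝ)/(2*(i:ℝ)+1) + ((2*(i:ℝ)^2)/(2*(i:ℝ)+1)) / (2*(N:ℝ)+1) := by
      field_simp
      ring
    calc ((A ∩ Set.Icc (-(N : ℤ)) (N : ℤ)).ncard : ℝ) / (2 * (N : ℝ) + 1)
        ≤ ((i:ℝ) * ((2*(N:ℝ))/(2*(i:ℝ)+1) + 1)) / (2*(N:ℝ)+1) := by gcongr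
      _ = _ := heq
  have hcb : Filter.IsCoboundedUnder (· ≤ ·) Filter.atTop
      (fun N : ℕ => ((A ∩ Set.Icc (-(N : ℤ)) (N : ℤ)).ncard : ℝ) / (2 * (N : ℝ) + 1)) := by
    apply Filter.IsBoundedUnder.isCoboundedUnder_le
    exact Filter.isBoundedUnder_of ⟨0, fun N => density_f_nonneg A N⟩
  have hbd : Filter.IsBoundedUnder (· ≤ ·) Filter.atTop g := hgl.isBoundedUnder_le
  have := Filter.limsup_le_limsup (Filter.Eventually.of_forall hle) hcb hbd
  rw [hgl.limsup_eq] at this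
  exact this

/-! ### The periodic near-extremal set and its density -/

/-- The periodic near-extremal independent set. -/
def Ak (i k : ℕ) : Set ℤ :=
  {n | ∃ q : ℤ, ∃ j s : ℕ, j < (k - 2*i)/(2*i+1) ∧ s < i ∧
    n = ((k:ℤ)+1)*q + (2*(i:ℤ)+1)*(j:ℤ) + 2*(s:ℤ)}

lemma J_facts (i k : ℕ) (hi : 1 ≤ i) (hk : 4*i+2 ≤ k) :
    1 ≤ (k - 2*i)/(2*i+1) ∧ (2*i+1)*((k - 2*i)/(2*i+1)) + 2*i ≤ k := by
  constructor
  · rw [Nat.le_div_iff_mul_le (by omega)]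
    omega
  · have h := Nat.div_mul_le_self (k - 2*i) (2*i+1)
    have : (2*i+1)*((k - 2*i)/(2*i+1)) = (k - 2*i)/(2*i+1) * (2*i+1) := by ring
    omega

lemma Ak_indep (i k : ℕ) (hi : 1 ≤ i) (hk : 4*i+2 ≤ k) :
    IsIndepSet {1, 2*i, k} (Ak i k) := by
  obtain ⟨hJ, hkk⟩ := J_facts i k hi hk
  rintro a ⟨qa, ja, sa, hja, hsa, rfl⟩ b ⟨qb, jb, sb, hjb, hsb, rfl⟩ hne hmem
  simp only [Finset.mem_insert, Finset.mem_singleton] at hmem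
  refine (key_cases i ((k - 2*i)/(2*i+1)) k hi hJ hkk qa qb ja jb sa sb
    (by positivity) (by omega) (by positivity) (by omega)
    (by positivity) (by omega) (by positivity) (by omega)
    _ rfl).2 (by omega)

lemma lower_count (i k : ℕ) (hi : 1 ≤ i) (hk : 4*i+2 ≤ k) (N : ℕ) :
    2*(N/(k+1)) * ((k - 2*i)/(2*i+1)) * i ≤ (Ak i k ∩ Set.Icc (-(N:ℤ)) (N:ℤ)).ncard := by
  classical
  obtain ⟨hJ, hkk⟩ := J_facts i k hi hk
  set J : ℕ := (k - 2*i)/(2*i+1) with hJdef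
  set Q : ℕ := N/(k+1) with hQdef
  set P : Finset (ℤ × (ℕ × ℕ)) :=
    Finset.Icc (-(Q:ℤ)) ((Q:ℤ)-1) ×ˢ (Finset.range J ×ˢ Finset.range i) with hP
  set F : ℤ × (ℕ × ℕ) → ℤ :=
    fun p => ((k:ℤ)+1)*p.1 + (2*(i:ℤ)+1)*(p.2.1:ℤ) + 2*(p.2.2:ℤ) with hF
  have hkZ : (2*(i:ℤ)+1)*(J:ℤ) + 2*(i:ℤ) ≤ (k:ℤ) := by exact_mod_cast hkk
  have hQk : (Q:ℤ)*((k:ℤ)+1) ≤ (N:ℤ) := by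
    have := Nat.div_mul_le_self N (k+1)
    exact_mod_cast this
  have hinj : Set.InjOn F ↑P := by
    rintro ⟨q, j, s⟩ hp ⟨q', j', s'⟩ hp' heq
    simp only [hP, Finset.coe_product, Set.mem_prod, Finset.mem_coe, Finset.mem_Icc,
      Finset.mem_range] at hp hp'
    have h0 := (key_cases i J k hi hJ hkk q q' j j' s s'
      (by positivity) (by omega) (by positivity) (by omega)
      (by positivity) (by omega) (by positivity) (by omega)
      0 (by simp only [hF] at heq; omega)).1 rfl
    have e1 : (j:ℤ) = (j':ℤ) := h0.2.1
    have e2 : (s:ℤ) = (s':ℤ) := h0.2.2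
    simp only [Prod.mk.injEq]
    exact ⟨h0.1, by omega, by omega⟩
  have hsub : ↑(Finset.image F P) ⊆ Ak i k ∩ Set.Icc (-(N:ℤ)) (N:ℤ) := by
    intro n hn
    simp only [Finset.coe_image, Set.mem_image, Finset.mem_coe] at hn
    obtain ⟨⟨q, j, s⟩, hp, rfl⟩ := hn
    simp only [hP, Finset.mem_product, Finset.mem_Icc, Finset.mem_range] at hp
    obtain ⟨⟨hq1, hq2⟩, hj, hs⟩ := hp
    constructor
    · exact ⟨q, j, s, hj, hs, rfl⟩
    · simp only [hF, Set.mem_Icc]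
      have hm1 : ((k:ℤ)+1)*(-(Q:ℤ)) ≤ ((k:ℤ)+1)*q :=
        mul_le_mul_of_nonneg_left hq1 (by positivity)
      have hm2 : ((k:ℤ)+1)*q ≤ ((k:ℤ)+1)*((Q:ℤ)-1) :=
        mul_le_mul_of_nonneg_left hq2 (by positivity)
      have hm3 : (2*(i:ℤ)+1)*(j:ℤ) ≤ (2*(i:ℤ)+1)*((J:ℤ)-1) :=
        mul_le_mul_of_nonneg_left (by omega) (by positivity)
      have hm4 : (0:ℤ) ≤ (2*(i:ℤ)+1)*(j:ℤ) := by positivity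
      have he1 : ((k:ℤ)+1)*(-(Q:ℤ)) = -((Q:ℤ)*((k:ℤ)+1)) := by ring
      have he2 : ((k:ℤ)+1)*((Q:ℤ)-1) = (Q:ℤ)*((k:ℤ)+1) - ((k:ℤ)+1) := by ring
      have he3 : (2*(i:ℤ)+1)*((J:ℤ)-1) = (2*(i:ℤ)+1)*(J:ℤ) - (2*(i:ℤ)+1) := by ring
      have hs' : (s:ℤ) ≤ (i:ℤ) - 1 := by omega
      have hs0 : (0:ℤ) ≤ (s:ℤ) := by positivity
      constructor <;> linarith
  have h5 : (Finset.Icc (-(Q:ℤ)) ((Q:ℤ)-1)).card = 2*Q := by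
    rw [Int.card_Icc]; omega
  have hPcard : P.card = 2*Q*(J*i) := by
    rw [hP, Finset.card_product, Finset.card_product, h5,
      Finset.card_range, Finset.card_range]
  calc 2*Q*J*i = P.card := by rw [hPcard]; ring
    _ = (Finset.image F P).card := (Finset.card_image_of_injOn hinj).symm
    _ = (↑(Finset.image F P) : Set ℤ).ncard := (Set.ncard_coe_finset _).symm
    _ ≤ _ := Set.ncard_le_ncard hsub (Set.Finite.inter_of_right (Set.finite_Icc _ _) _)

lemma density_lower (i k : ℕ) (hi : 1 ≤ i) (hk : 4*i+2 ≤ k) :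
    ((i:ℝ) * (((k - 2*i)/(2*i+1) : ℕ) : ℝ)) / ((k:ℝ)+1) ≤ density (Ak i k) := by
  set J : ℕ := (k - 2*i)/(2*i+1) with hJdef
  set g : ℕ → ℝ :=
    fun N => ((i:ℝ)*(J:ℝ)*(2*((N:ℝ)-(k:ℝ))/((k:ℝ)+1))) / (2*(N:ℝ)+1) with hg
  have hkpos : (0:ℝ) < (k:ℝ)+1 := by positivity
  have hgl : Filter.Tendsto g Filter.atTop (nhds (((i:ℝ)*(J:ℝ))/((k:ℝ)+1))) := by
    have heq : g = fun N : ℕ => ((i:ℝ)*(J:ℝ))/((k:ℝ)+1)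
        - ((i:ℝ)*(J:ℝ)*((2*(k:ℝ)+1)/((k:ℝ)+1))) / (2*(N:ℝ)+1) := by
      funext N
      rw [hg]
      have hNpos : (0:ℝ) < 2*(N:ℝ)+1 := by positivity
      field_simp
      ring
    rw [heq]
    have := (tendsto_const_nhds :
        Filter.Tendsto (fun _ : ℕ => ((i:ℝ)*(J:ℝ))/((k:ℝ)+1)) Filter.atTop
          (nhds (((i:ℝ)*(J:ℝ))/((k:ℝ)+1)))).sub
      (tendsto_err ((i:ℝ)*(J:ℝ)*((2*(k:ℝ)+1)/((k:ℝ)+1))))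
    simpa using this
  have hle : ∀ N : ℕ, g N ≤
      ((Ak i k ∩ Set.Icc (-(N : ℤ)) (N : ℤ)).ncard : ℝ) / (2 * (N : ℝ) + 1) := by
    intro N
    set Q : ℕ := N/(k+1) with hQdef
    have hcount := lower_count i k hi hk N
    rw [← hJdef, ← hQdef] at hcount
    have hc : ((2*Q*J*i : ℕ):ℝ) ≤ ((Ak i k ∩ Set.Icc (-(N : ℤ)) (N : ℤ)).ncard : ℝ) := by
      exact_mod_cast hcount
    have hQr : (N:ℝ) - (k:ℝ) ≤ ((k:ℝ)+1)*(Q:ℝ) := by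
      have hdm := Nat.div_add_mod N (k+1)
      have hml : N % (k+1) ≤ k := by
        have := Nat.mod_lt N (show 0 < k+1 by omega); omega
      have hdm' : ((k:ℝ)+1)*(Q:ℝ) + ((N % (k+1) : ℕ):ℝ) = (N:ℝ) := by
        rw [hQdef]; exact_mod_cast hdm
      have hml' : ((N % (k+1) : ℕ):ℝ) ≤ (k:ℝ) := by exact_mod_cast hml
      linarith
    have hnum : (i:ℝ)*(J:ℝ)*(2*((N:ℝ)-(k:ℝ))/((k:ℝ)+1)) ≤ ((2*Q*J*i : ℕ):ℝ) := by
      have h2 : 2*((N:ℝ)-(k:ℝ))/((k:ℝ)+1) ≤ 2*(Q:ℝ) := by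
        rw [div_le_iff₀ hkpos]
        linarith
      calc (i:ℝ)*(J:ℝ)*(2*((N:ℝ)-(k:ℝ))/((k:ℝ)+1))
          ≤ (i:ℝ)*(J:ℝ)*(2*(Q:ℝ)) :=
            mul_le_mul_of_nonneg_left h2 (by positivity)
        _ = ((2*Q*J*i : ℕ):ℝ) := by push_cast; ring
    rw [hg]
    exact (div_le_div_iff_of_pos_right (by positivity)).mpr (hnum.trans hc)
  have hcb : Filter.IsCoboundedUnder (· ≤ ·) Filter.atTop g := by
    apply Filter.IsBoundedUnder.isCoboundedUnder_le
    exact hgl.isBoundedUnder_ge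
  have hbd : Filter.IsBoundedUnder (· ≤ ·) Filter.atTop
      (fun N : ℕ => ((Ak i k ∩ Set.Icc (-(N : ℤ)) (N : ℤ)).ncard : ℝ) / (2 * (N : ℝ) + 1)) :=
    Filter.isBoundedUnder_of ⟨1, fun N => density_f_le_one _ N⟩
  have hfin := Filter.limsup_le_limsup (Filter.Eventually.of_forall hle) hcb hbd
  rw [hgl.limsup_eq] at hfin
  exact hfin

/-! ### Main theorem -/

lemma indep_diff_one (i k : ℕ) (hi : 1 ≤ i) (A : Set ℤ)
    (hA : IsIndepSet {1, 2*i, k} A) :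
    (∀ a ∈ A, ∀ b ∈ A, a - b ≠ 1) ∧ (∀ a ∈ A, ∀ b ∈ A, a - b ≠ 2*(i:ℤ)) := by
  constructor
  · intro a ha b hb heq
    refine hA a ha b hb (by omega) ?_
    have h1 : (a - b).natAbs = 1 := by omega
    simp [h1]
  · intro a ha b hb heq
    refine hA a ha b hb (by omega) ?_
    have h1 : (a - b).natAbs = 2*i := by omega
    simp [h1]

lemma indRatio_le (i k : ℕ) (hi : 1 ≤ i) :
    indRatio {1, 2*i, k} ≤ (i:ℝ) / (2*(i:ℝ)+1) := by
  apply Real.sSup_le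
  · rintro x ⟨A, hA, rfl⟩
    obtain ⟨h1, h2⟩ := indep_diff_one i k hi A hA
    exact density_upper i hi A h1 h2
  · positivity

lemma indRatio_ge (i k : ℕ) (hi : 1 ≤ i) (hk : 4*i+2 ≤ k) :
    ((i:ℝ) * (((k - 2*i)/(2*i+1) : ℕ) : ℝ)) / ((k:ℝ)+1) ≤ indRatio {1, 2*i, k} := by
  have hbdd : BddAbove (density '' {A : Set ℤ | IsIndepSet {1, 2*i, k} A}) := by
    refine ⟨(i:ℝ) / (2*(i:ℝ)+1), ?_⟩
    rintro x ⟨A, hA, rfl⟩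
    obtain ⟨h1, h2⟩ := indep_diff_one i k hi A hA
    exact density_upper i hi A h1 h2
  have hmem : density (Ak i k) ∈ density '' {A : Set ℤ | IsIndepSet {1, 2*i, k} A} :=
    ⟨Ak i k, Ak_indep i k hi hk, rfl⟩
  exact (density_lower i k hi hk).trans (le_csSup hbdd hmem)


/-- For fixed `i ≥ 1`, `ᾱ({1, 2i, k}) → i/(2i+1)` as `k → ∞`. -/
theorem tendsto_indRatio_one_even_k (i : ℕ) (hi : 1 ≤ i) :
    Filter.Tendsto (fun k : ℕ => indRatio ({1, 2 * i, k} : Finset ℕ))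
      Filter.atTop (nhds ((i : ℝ) / (2 * (i : ℝ) + 1))) := by
  set l : ℕ → ℝ := fun k => (i:ℝ)/(2*(i:ℝ)+1) * (((k:ℝ)-4*(i:ℝ))/((k:ℝ)+1)) with hl
  have hltend : Filter.Tendsto l Filter.atTop (nhds ((i:ℝ)/(2*(i:ℝ)+1))) := by
    have hfrac : Filter.Tendsto (fun k : ℕ => ((k:ℝ)-4*(i:ℝ))/((k:ℝ)+1))
        Filter.atTop (nhds 1) := by
      have heq : (fun k : ℕ => ((k:ℝ)-4*(i:ℝ))/((k:ℝ)+1))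
          = fun k : ℕ => 1 - (4*(i:ℝ)+1)/((k:ℝ)+1) := by
        funext k
        have : (0:ℝ) < (k:ℝ)+1 := by positivity
        field_simp
        ring
      rw [heq]
      have hdiv : Filter.Tendsto (fun k : ℕ => (4*(i:ℝ)+1)/((k:ℝ)+1))
          Filter.atTop (nhds 0) :=
        Filter.Tendsto.div_atTop tendsto_const_nhds
          (Filter.tendsto_atTop_add_const_right _ 1 tendsto_natCast_atTop_atTop)
      have := (tendsto_const_nhds :
          Filter.Tendsto (fun _ : ℕ => (1:ℝ)) Filter.atTop (nhds 1)).sub hdiv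
      simpa using this
    have := hfrac.const_mul ((i:ℝ)/(2*(i:ℝ)+1))
    simpa [hl] using this
  apply tendsto_of_tendsto_of_tendsto_of_le_of_le' hltend
    (tendsto_const_nhds :
      Filter.Tendsto (fun _ : ℕ => (i:ℝ)/(2*(i:ℝ)+1)) Filter.atTop
        (nhds ((i:ℝ)/(2*(i:ℝ)+1))))
  · filter_upwards [Filter.eventually_ge_atTop (4*i+2)] with k hk
    set J : ℕ := (k - 2*i)/(2*i+1) with hJdef
    have hlow := indRatio_ge i k hi hk
    refine le_trans ?_ hlow
    -- l k ≤ i*J/(k+1)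
    have hbig : ((k:ℝ) - 4*(i:ℝ)) ≤ (2*(i:ℝ)+1)*(J:ℝ) := by
      have hdm := Nat.div_add_mod (k - 2*i) (2*i+1)
      have hml : (k - 2*i) % (2*i+1) ≤ 2*i := by
        have := Nat.mod_lt (k - 2*i) (show 0 < 2*i+1 by omega); omega
      have hdm' : (2*(i:ℝ)+1)*(J:ℝ) + (((k - 2*i) % (2*i+1) : ℕ):ℝ) = ((k - 2*i : ℕ):ℝ) := by
        rw [hJdef]; exact_mod_cast hdm
      have hml' : (((k - 2*i) % (2*i+1) : ℕ):ℝ) ≤ 2*(i:ℝ) := by exact_mod_cast hml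
      have hsubcast : ((k - 2*i : ℕ):ℝ) = (k:ℝ) - 2*(i:ℝ) := by
        have : 2*i ≤ k := by omega
        push_cast [this]
        ring
      rw [hsubcast] at hdm'
      linarith
    have hipos : (0:ℝ) < 2*(i:ℝ)+1 := by positivity
    have hkpos : (0:ℝ) < (k:ℝ)+1 := by positivity
    have h6 : ((k:ℝ)-4*(i:ℝ))/(2*(i:ℝ)+1) ≤ (J:ℝ) := by
      rw [div_le_iff₀ hipos]
      linarith
    have hrw : l k = (i:ℝ)*(((k:ℝ)-4*(i:ℝ))/(2*(i:ℝ)+1))/((k:ℝ)+1) := by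
      rw [hl]
      field_simp
    rw [hrw]
    gcongr
  · filter_upwards with k
    exact indRatio_le i k hi
end

section
/- Let i ≥ 5 be an integer. Then ᾱ({1, 5, 2i}) = i/(2i+5). -/
open Filter Topology

def Aset (i : ℕ) : Set ℤ := {x : ℤ | ∃ r : ℕ, r < i ∧ x % (2*(i:ℤ)+5) = 2*r}

lemma Aset_indep (i : ℕ) (hi : 5 ≤ i) : IsIndepSet ({1, 5, 2*i} : Finset ℕ) (Aset i) := by
  intro a ha b hb hne hmem
  obtain ⟨r, hr, har⟩ := ha
  obtain ⟨s, hs, hbs⟩ := hb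
  set m : ℤ := 2*(i:ℤ)+5 with hm
  have hmpos : (0:ℤ) < m := by positivity
  have hea : m * (a / m) + 2*(r:ℤ) = a := by
    have := Int.mul_ediv_add_emod a m
    omega
  have heb : m * (b / m) + 2*(s:ℤ) = b := by
    have := Int.mul_ediv_add_emod b m
    omega
  set K : ℤ := a / m - b / m with hK
  have hkey : a - b = m * K + 2*(r:ℤ) - 2*(s:ℤ) := by
    have hmk : m * K = m * (a/m) - m * (b/m) := by rw [hK]; ring
    linarith [hea, heb, hmk]
  simp only [Finset.mem_insert, Finset.mem_singleton] at hmem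
  have habs : a - b = 1 ∨ a - b = -1 ∨ a - b = 5 ∨ a - b = -5 ∨
      a - b = 2*(i:ℤ) ∨ a - b = -(2*(i:ℤ)) := by
    rcases hmem with h | h | h
    · omega
    · omega
    · have : (a-b).natAbs = 2*i := h
      omega
  have hKbig : K = -1 ∨ K = 0 ∨ K = 1 := by
    by_contra hcon
    push_neg at hcon
    rcases le_or_gt 2 K with h | h
    · have : 2*m ≤ m*K := by nlinarith
      omega
    · have h2 : K ≤ -2 := by omega
      have : m*K ≤ -(2*m) := by nlinarith
      omega
  rcases hKbig with h | h | h <;> rw [h] at hkey <;>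
    simp only [mul_neg_one, mul_zero, mul_one] at hkey <;> omega

lemma Aset_block (i : ℕ) (hi : 5 ≤ i) (lo : ℤ) :
    (Aset i ∩ Set.Ico lo (lo + (2*(i:ℤ)+5))).ncard = i := by
  classical
  set m : ℤ := 2*(i:ℤ)+5 with hm
  have hmpos : (0:ℤ) < m := by positivity
  set g : Fin i → ℤ := fun r => lo + (2*(r:ℤ) - lo) % m with hg
  have hgmod : ∀ r : Fin i, g r % m = 2*(r:ℤ) := by
    intro r
    have h1 : g r % m = (lo + (2*(r:ℤ) - lo)) % m := by
      rw [hg]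
      simp only []
      conv_rhs => rw [Int.add_emod]
      rw [Int.add_emod, Int.emod_emod_of_dvd _ dvd_rfl]
    rw [h1]
    have : lo + (2*(r:ℤ) - lo) = 2*(r:ℤ) := by ring
    rw [this]
    apply Int.emod_eq_of_lt
    · positivity
    · have := r.2
      omega
  have hgmem : ∀ r : Fin i, g r ∈ Aset i ∩ Set.Ico lo (lo + m) := by
    intro r
    have h1 : 0 ≤ (2*(r:ℤ) - lo) % m := Int.emod_nonneg _ (by omega)
    have h2 : (2*(r:ℤ) - lo) % m < m := Int.emod_lt_of_pos _ hmpos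
    refine ⟨⟨r, r.2, hgmod r⟩, ?_, ?_⟩
    · simp only [hg]; omega
    · simp only [hg]; omega
  have hginj : Function.Injective g := by
    intro r s hrs
    have h1 := hgmod r
    have h2 := hgmod s
    rw [hrs] at h1
    rw [h1] at h2
    ext
    omega
  have hset : Aset i ∩ Set.Ico lo (lo + m) = Set.range g := by
    apply Set.eq_of_subset_of_subset
    · rintro x ⟨⟨r, hr, hxr⟩, hx1, hx2⟩
      refine ⟨⟨r, hr⟩, ?_⟩
      have h1 := hgmod ⟨r, hr⟩
      have h2 : (x - g ⟨r, hr⟩) % m = 0 := by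
        rw [Int.sub_emod, hxr, h1]
        simp
      obtain ⟨c, hc⟩ := Int.dvd_of_emod_eq_zero h2
      have hgin := hgmem ⟨r, hr⟩
      obtain ⟨_, hg1, hg2⟩ := hgin
      have hc0 : c = 0 := by
        by_contra hcne
        rcases le_or_gt 1 c with h | h
        · have : m ≤ m*c := by nlinarith
          omega
        · have h3 : c ≤ -1 := by omega
          have : m*c ≤ -m := by nlinarith
          omega
      rw [hc0, mul_zero] at hc
      omega
    · rintro x ⟨r, rfl⟩
      exact hgmem r
  rw [hset]
  have h1 : (Set.range g).ncard = Nat.card (Fin i) := by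
    rw [← Nat.card_coe_set_eq]
    exact Nat.card_range_of_injective hginj
  rw [h1, Nat.card_eq_fintype_card, Fintype.card_fin]

lemma Aset_blocks (i : ℕ) (hi : 5 ≤ i) :
    ∀ (K : ℕ) (lo : ℤ), (Aset i ∩ Set.Ico lo (lo + K*(2*(i:ℤ)+5))).ncard = K * i := by
  intro K
  induction K with
  | zero => intro lo; simp
  | succ n ih =>
    intro lo
    have hsplit : Set.Ico lo (lo + ((n:ℕ)+1:ℕ)*(2*(i:ℤ)+5))
        = Set.Ico lo (lo + (n:ℕ)*(2*(i:ℤ)+5)) ∪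
          Set.Ico (lo + (n:ℕ)*(2*(i:ℤ)+5)) (lo + (n:ℕ)*(2*(i:ℤ)+5) + (2*(i:ℤ)+5)) := by
      rw [Set.Ico_union_Ico_eq_Ico]
      · norm_num
        push_cast
        ring
      · nlinarith [Nat.cast_nonneg (α := ℤ) n]
      · omega
    rw [hsplit, Set.inter_union_distrib_left]
    have hdisj : Disjoint (Aset i ∩ Set.Ico lo (lo + (n:ℕ)*(2*(i:ℤ)+5)))
        (Aset i ∩ Set.Ico (lo + (n:ℕ)*(2*(i:ℤ)+5)) (lo + (n:ℕ)*(2*(i:ℤ)+5) + (2*(i:ℤ)+5))) := by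
      apply Set.disjoint_of_subset Set.inter_subset_right Set.inter_subset_right
      exact Set.Ico_disjoint_Ico_same
    rw [Set.ncard_union_eq hdisj (Set.Finite.inter_of_right (Set.finite_Ico _ _) _)
      (Set.Finite.inter_of_right (Set.finite_Ico _ _) _)]
    rw [ih lo, Aset_block i hi]
    ring

lemma count_lower (i : ℕ) (hi : 5 ≤ i) (N : ℕ) :
    ((2*N+1)/(2*i+5)) * i ≤ (Aset i ∩ Set.Icc (-(N:ℤ)) N).ncard := by
  set K := (2*N+1)/(2*i+5) with hK
  have hKm : K*(2*i+5) ≤ 2*N+1 := by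
    rw [hK]
    exact Nat.div_mul_le_self _ _
  have hsub : Aset i ∩ Set.Ico (-(N:ℤ)) (-(N:ℤ) + K*(2*(i:ℤ)+5)) ⊆
      Aset i ∩ Set.Icc (-(N:ℤ)) N := by
    apply Set.inter_subset_inter_right
    intro x hx
    simp only [Set.mem_Ico] at hx
    simp only [Set.mem_Icc]
    have hcast : (K:ℤ)*(2*(i:ℤ)+5) ≤ 2*N+1 := by exact_mod_cast hKm
    obtain ⟨h1, h2⟩ := hx
    refine ⟨h1, ?_⟩
    generalize (K : ℤ)*(2*(i:ℤ)+5) = Q at hcast h2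
    omega
  calc K * i = (Aset i ∩ Set.Ico (-(N:ℤ)) (-(N:ℤ) + K*(2*(i:ℤ)+5))).ncard :=
        (Aset_blocks i hi K _).symm
    _ ≤ (Aset i ∩ Set.Icc (-(N:ℤ)) N).ncard :=
        Set.ncard_le_ncard hsub (Set.Finite.inter_of_right (Set.finite_Icc _ _) _)

lemma window_bound (i : ℕ) (hi : 5 ≤ i) (A : Set ℤ)
    (hA : IsIndepSet ({1, 5, 2*i} : Finset ℕ) A) (t : ℤ) :
    (A ∩ Set.Ico t (t + (2*(i:ℤ)+5))).ncard ≤ i := by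
  classical
  by_contra hcon
  push_neg at hcon
  set W := A ∩ Set.Ico t (t + (2*(i:ℤ)+5)) with hW
  have hWfin : W.Finite := Set.Finite.inter_of_right (Set.finite_Ico _ _) A
  have hfin : Fintype W := hWfin.fintype
  have hcard : i + 1 ≤ hWfin.toFinset.card := by
    rw [← Set.ncard_eq_toFinset_card W hWfin]; omega
  obtain ⟨s, hsub, hscard⟩ := Finset.exists_subset_card_eq hcard
  set f : Fin (i+1) ↪o ℤ := s.orderEmbOfFin hscard with hf
  have hmemW : ∀ j : Fin (i+1), f j ∈ W := by
    intro j
    have : f j ∈ s := s.orderEmbOfFin_mem hscard j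
    have := hsub this
    rwa [Set.Finite.mem_toFinset] at this
  -- F as function on ℕ
  set F : ℕ → ℤ := fun j => f ⟨min j i, by omega⟩ with hF
  have hFmem : ∀ j, F j ∈ A ∧ t ≤ F j ∧ F j < t + (2*(i:ℤ)+5) := by
    intro j
    have := hmemW ⟨min j i, by omega⟩
    exact ⟨this.1, this.2.1, this.2.2⟩
  have hFlt : ∀ j k, j < k → k ≤ i → F j < F k := by
    intro j k hjk hk
    apply f.strictMono
    simp only [Fin.mk_lt_mk]
    omega
  have hdiff : ∀ j k, j < k → k ≤ i →
      (F k - F j ≠ 1 ∧ F k - F j ≠ 5 ∧ F k - F j ≠ 2*(i:ℤ)) := by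
    intro j k hjk hk
    have h1 := (hFmem k).1
    have h2 := (hFmem j).1
    have hne : F k ≠ F j := (hFlt j k hjk hk).ne'
    have := hA _ h1 _ h2 hne
    simp only [Finset.mem_insert, Finset.mem_singleton] at this
    push_neg at this
    omega
  -- steps at least 2
  have hstep : ∀ j, j + 1 ≤ i → F j + 2 ≤ F (j+1) := by
    intro j hj
    have h1 := hFlt j (j+1) (by omega) hj
    have h2 := (hdiff j (j+1) (by omega) hj).1
    omega
  have h2 : ∀ d j, j + d ≤ i → F j + 2*d ≤ F (j + d) := by
    intro d
    induction d with
    | zero => intro j _; simp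
    | succ n ih =>
      intro j hj
      have := ih (j+1) (by omega)
      have := hstep j (by omega)
      have : F (j + 1 + n) = F (j + (n+1)) := by ring_nf
      omega
  set e : ℕ → ℤ := fun j => F j - F 0 - 2*(j:ℤ) with he
  have he0 : e 0 = 0 := by simp [he]
  have hmono : ∀ j k, j ≤ k → k ≤ i → e j ≤ e k := by
    intro j k hjk hk
    rcases Nat.eq_or_lt_of_le hjk with h | h
    · subst h; rfl
    · have := h2 (k - j) j (by omega)
      have hkj : j + (k - j) = k := by omega
      rw [hkj] at this
      simp only [he]
      push_cast
      omega
  have heiub : e i ≤ 4 := by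
    have h1 := (hFmem i).2
    have h2 := (hFmem 0).2
    simp only [he]
    push_cast
    omega
  have hApos : ∀ j, j + 1 ≤ i → e (j+1) - e j ≠ 3 := by
    intro j hj
    have := (hdiff j (j+1) (by omega) hj).2.1
    simp only [he]
    push_cast
    omega
  have hB : ∀ j, j + 2 ≤ i → e (j+2) - e j ≠ 1 := by
    intro j hj
    have := (hdiff j (j+2) (by omega) hj).2.1
    simp only [he]
    push_cast
    omega
  -- 2i constraints
  have hM : ∀ j k, j < k → k ≤ i → 2*((k:ℤ) - j) + (e k - e j) ≠ 2*i := by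
    intro j k hjk hk
    have := (hdiff j k hjk hk).2.2
    simp only [he]
    push_cast
    omega
  obtain ⟨i', rfl⟩ : ∃ i', i = i' + 5 := ⟨i - 5, by omega⟩
  set i := i' + 5 with hidef
  have hC : e i ≠ 0 := by have := hM 0 i (by omega) (by omega); push_cast at this ⊢; omega
  have hD1 : e (i'+4) ≠ 2 := by have := hM 0 (i'+4) (by omega) (by omega); push_cast at this ⊢; omega
  have hD2 : e i - e 1 ≠ 2 := by have := hM 1 i (by omega) (by omega); push_cast at this ⊢; omega
  have hE1 : e (i'+3) ≠ 4 := by have := hM 0 (i'+3) (by omega) (by omega); push_cast at this ⊢; omega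
  have hE2 : e (i'+4) - e 1 ≠ 4 := by have := hM 1 (i'+4) (by omega) (by omega); push_cast at this ⊢; omega
  have hE3 : e i - e 2 ≠ 4 := by have := hM 2 i (by omega) (by omega); push_cast at this ⊢; omega

  have hA' : ∀ j k, j + 1 = k → k ≤ i → e k - e j ≠ 3 := by
    intro j k h hk
    subst h
    exact hApos j hk
  have hB' : ∀ j k, j + 2 = k → k ≤ i → e k - e j ≠ 1 := by
    intro j k h hk
    subst h
    exact hB j hk
  have hlb : ∀ j, j ≤ i → 0 ≤ e j := by
    intro j hj
    have := hmono 0 j (by omega) hj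
    omega
  have hub : ∀ j, j ≤ i → e j ≤ e i := by
    intro j hj
    exact hmono j i hj (le_refl i)
  have hFR : ∀ v : ℤ, 1 ≤ v → ∀ J, J ≤ i → v ≤ e J →
      ∃ p, 1 ≤ p ∧ p ≤ J ∧ v ≤ e p ∧ ∀ k, k < p → e k < v := by
    intro v hv J hJ hvJ
    have hex : ∃ p, v ≤ e p := ⟨J, hvJ⟩
    refine ⟨Nat.find hex, ?_, Nat.find_min' hex hvJ, Nat.find_spec hex, fun k hk => ?_⟩
    · rcases Nat.eq_zero_or_pos (Nat.find hex) with h0 | h0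
      · have := Nat.find_spec hex
        rw [h0] at this
        omega
      · omega
    · have := Nat.find_min hex hk
      omega
  have hno1 : e 1 = 0 → ∀ j, j ≤ i → e j ≠ 1 := by
    intro h1 j hj hj1
    obtain ⟨p, hp1, hpj, hpv, hmin⟩ := hFR 1 le_rfl j hj (by omega)
    have hpi : p ≤ i := le_trans hpj hj
    have hep : e p = 1 := by
      have := hmono p j hpj hj
      omega
    rcases Nat.lt_or_ge p 2 with h | h
    · have hp : p = 1 := by omega
      rw [hp] at hep
      omega
    · obtain ⟨u, rfl⟩ : ∃ u, p = u + 2 := ⟨p - 2, by omega⟩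
      have h0a := hmin (u+1) (by omega)
      have h0b := hlb u (by omega)
      have h0c := hmono u (u+1) (by omega) (by omega)
      have := hB u (by omega)
      omega
  have hcase : e i = 1 ∨ e i = 2 ∨ e i = 3 ∨ e i = 4 := by
    have := hlb i (le_refl i)
    omega
  have hei0 : 0 ≤ e i := hlb i (le_refl i)
  rcases hcase with ht | ht | ht | ht
  · -- e i = 1
    obtain ⟨p, hp1, hpi, hpv, hmin⟩ := hFR 1 le_rfl i (le_refl i) (by omega)
    have hep : e p = 1 := by have := hub p hpi; omega
    rcases Nat.lt_or_ge p 2 with h | h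
    · have hp : p = 1 := by omega
      have h2v : e 2 = 1 := by
        have := hmono 1 2 (by omega) (by omega)
        have := hub 2 (by omega)
        rw [hp] at hep
        omega
      have := hB' 0 2 rfl (by omega)
      omega
    · obtain ⟨u, rfl⟩ : ∃ u, p = u + 2 := ⟨p - 2, by omega⟩
      have h0a := hmin (u+1) (by omega)
      have h0b := hlb u (by omega)
      have h0c := hmono u (u+1) (by omega) (by omega)
      have := hB u (by omega)
      omega
  · -- e i = 2
    have he1 : e 1 = 1 := by
      have h1 := hlb 1 (by omega)
      have h2 := hmono 1 (i'+4) (by omega) (by omega)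
      have h3 := hub (i'+4) (by omega)
      omega
    have he2 : e 2 = 2 := by
      have := hB' 0 2 rfl (by omega)
      have := hmono 1 2 (by omega) (by omega)
      have := hub 2 (by omega)
      omega
    have := hmono 2 (i'+4) (by omega) (by omega)
    have := hub (i'+4) (by omega)
    omega
  · -- e i = 3
    have he1 : e 1 = 0 ∨ e 1 = 2 := by
      have := hA' 0 1 rfl (by omega)
      have := hlb 1 (by omega)
      have := hub 1 (by omega)
      omega
    rcases he1 with he1 | he1
    · -- e 1 = 0
      have hn1 := hno1 he1
      obtain ⟨q, hq1, hqi, hqv, hqmin⟩ := hFR 2 (by omega) i (le_refl i) (by omega)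
      have hq2 : 2 ≤ q := by
        rcases Nat.lt_or_ge q 2 with h | h
        · exfalso
          have : q = 1 := by omega
          rw [this] at hqv
          omega
        · exact h
      have heq1 : e (q-1) = 0 := by
        have h1 := hqmin (q-1) (by omega)
        have h2 := hn1 (q-1) (by omega)
        have h3 := hlb (q-1) (by omega)
        omega
      have heq : e q = 2 := by
        have hA1 := hApos (q-1) (by omega)
        have : q - 1 + 1 = q := by omega
        rw [this] at hA1
        have := hub q hqi
        omega
      obtain ⟨p, hp1, hpi, hpv, hpmin⟩ := hFR 3 (by omega) i (le_refl i) (by omega)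
      have hep : e p = 3 := by have := hub p hpi; omega
      have hqp : q < p := by
        rcases Nat.lt_or_ge q p with h | h
        · exact h
        · exfalso
          have := hmono p q h hqi
          omega
      have hepm : e (p-1) = 2 := by
        have h1 := hpmin (p-1) (by omega)
        have h2 := hmono q (p-1) (by omega) (by omega)
        omega
      have hpq1 : p = q + 1 := by
        by_contra hne
        have hq2p : q ≤ p - 2 := by omega
        have h1 := hmono q (p-2) hq2p (by omega)
        have h2 := hmono (p-2) (p-1) (by omega) (by omega)
        have h3 := hB (p-2) (by omega)
        have : p - 2 + 2 = p := by omega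
        rw [this] at h3
        omega
      rcases Nat.lt_or_ge i (q+2) with h | h
      · -- q+2 > i, so p = i, q = i'+4
        have hqi4 : q = i' + 4 := by omega
        rw [hqi4] at heq
        omega
      · have h1 := hmono p (q+2) (by omega) (by omega)
        have h2 := hub (q+2) (by omega)
        have h3 := hB q (by omega)
        omega
    · -- e 1 = 2
      have hi4 : e (i'+4) = 3 := by
        have := hmono 1 (i'+4) (by omega) (by omega)
        have := hub (i'+4) (by omega)
        omega
      obtain ⟨p, hp1, hpi, hpv, hpmin⟩ := hFR 3 (by omega) (i'+4) (by omega) (by omega)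
      have hep : e p = 3 := by
        have := hmono p (i'+4) hpi (by omega)
        omega
      have hp2 : 2 ≤ p := by
        rcases Nat.lt_or_ge p 2 with h | h
        · exfalso
          have : p = 1 := by omega
          rw [this] at hep
          omega
        · exact h
      have hepm : e (p-1) = 2 := by
        have h1 := hpmin (p-1) (by omega)
        have h2 := hmono 1 (p-1) (by omega) (by omega)
        omega
      have hpe : p = 2 := by
        by_contra hne
        have h1 := hmono 1 (p-2) (by omega) (by omega)
        have h2 := hmono (p-2) (p-1) (by omega) (by omega)
        have h3 := hB (p-2) (by omega)
        have : p - 2 + 2 = p := by omega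
        rw [this] at h3
        omega
      have he3 : e 3 = 3 := by
        have := hmono 2 3 (by omega) (by omega)
        have := hub 3 (by omega)
        rw [hpe] at hep
        omega
      have := hB' 1 3 rfl (by omega)
      omega
  · -- e i = 4
    have he1 : e 1 = 0 ∨ e 1 = 1 ∨ e 1 = 4 := by
      have := hA' 0 1 rfl (by omega)
      have := hlb 1 (by omega)
      have := hub 1 (by omega)
      omega
    rcases he1 with he1 | he1 | he1
    · -- e 1 = 0
      have hn1 := hno1 he1
      obtain ⟨q, hq1, hqi, hqv, hqmin⟩ := hFR 2 (by omega) i (le_refl i) (by omega)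
      have hq2 : 2 ≤ q := by
        rcases Nat.lt_or_ge q 2 with h | h
        · exfalso
          have : q = 1 := by omega
          rw [this] at hqv
          omega
        · exact h
      have heq1 : e (q-1) = 0 := by
        have h1 := hqmin (q-1) (by omega)
        have h2 := hn1 (q-1) (by omega)
        have h3 := hlb (q-1) (by omega)
        omega
      have heq : e q = 2 ∨ e q = 4 := by
        have hA1 := hApos (q-1) (by omega)
        have : q - 1 + 1 = q := by omega
        rw [this] at hA1
        have := hub q hqi
        omega
      rcases heq with heq | heq
      · -- e q = 2
        obtain ⟨p, hp1, hpi, hpv, hpmin⟩ := hFR 3 (by omega) i (le_refl i) (by omega)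
        have hqp : q < p := by
          rcases Nat.lt_or_ge q p with h | h
          · exact h
          · exfalso
            have := hmono p q h hqi
            omega
        have hepm : e (p-1) = 2 := by
          have h1 := hpmin (p-1) (by omega)
          have h2 := hmono q (p-1) (by omega) (by omega)
          omega
        have hep : e p = 3 ∨ e p = 4 := by
          have hA1 := hApos (p-1) (by omega)
          have : p - 1 + 1 = p := by omega
          rw [this] at hA1
          have := hub p hpi
          omega
        rcases hep with hep | hep
        · -- e p = 3
          have hpq1 : p = q + 1 := by
            by_contra hne
            have h1 := hmono q (p-2) (by omega) (by omega)
            have h2 := hmono (p-2) (p-1) (by omega) (by omega)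
            have h3 := hB (p-2) (by omega)
            have : p - 2 + 2 = p := by omega
            rw [this] at h3
            omega
          subst hpq1
          rcases Nat.lt_or_ge i (q+2) with h | h
          · -- p = i, e i = 3 contradiction
            have hqq : q + 1 = i := by omega
            rw [hqq] at hep
            omega
          · have h3 := hB q (by omega)
            have h4 := hmono (q+1) (q+2) (by omega) (by omega)
            have h5 := hub (q+2) (by omega)
            have heq2 : e (q+2) = 4 := by omega
            rcases Nat.lt_or_ge i (q+3) with h6 | h6
            · -- q = i'+3
              have hqe : q = i' + 3 := by omega
              have he2 : e 2 = 0 := by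
                have := hqmin 2 (by omega)
                have := hn1 2 (by omega)
                have := hlb 2 (by omega)
                omega
              omega
            · have h7 := hB' (q+1) (q+3) (by omega) (by omega)
              have h8 := hmono (q+2) (q+3) (by omega) (by omega)
              have h9 := hub (q+3) (by omega)
              omega
        · -- e p = 4
          have hpge : i' + 4 ≤ p := by
            by_contra hne
            have := hmono p (i'+3) (by omega) (by omega)
            have := hub (i'+3) (by omega)
            omega
          rcases Nat.lt_or_ge p (i'+5) with h | h
          · -- p = i'+4
            have hpe : p = i' + 4 := by omega
            rw [hpe] at hep
            omega
          · -- p = i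
            have hpe : p = i := by omega
            have : e (i'+4) = 2 := by
              have h1 := hpmin (i'+4) (by omega)
              have h2 := hmono q (i'+4) (by omega) (by omega)
              omega
            omega
      · -- e q = 4
        have he2 : 2 ≤ e 2 := by
          have := hn1 2 (by omega)
          have := hlb 2 (by omega)
          omega
        have hqe : q ≤ 2 := by
          by_contra hne
          have := hqmin 2 (by omega)
          omega
        have he24 : e 2 = 4 := by
          have := hmono q 2 (by omega) (by omega)
          have := hub 2 (by omega)
          omega
        have := hmono 2 (i'+3) (by omega) (by omega)
        have := hub (i'+3) (by omega)
        omega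
    · -- e 1 = 1
      have he2 : e 2 = 2 ∨ e 2 = 3 := by
        have := hB' 0 2 rfl (by omega)
        have := hA' 1 2 rfl (by omega)
        have := hmono 1 2 (by omega) (by omega)
        have := hub 2 (by omega)
        omega
      rcases he2 with he2 | he2
      · -- e 2 = 2
        have he3 : e 3 = 3 ∨ e 3 = 4 := by
          have := hB' 1 3 rfl (by omega)
          have := hA' 2 3 rfl (by omega)
          have := hmono 2 3 (by omega) (by omega)
          have := hub 3 (by omega)
          omega
        rcases he3 with he3 | he3
        · have he4 : e 4 = 4 := by
            have := hB' 2 4 rfl (by omega)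
            have := hmono 3 4 (by omega) (by omega)
            have := hub 4 (by omega)
            omega
          have := hB' 3 5 rfl (by omega)
          have := hmono 4 5 (by omega) (by omega)
          have := hub 5 (by omega)
          omega
        · have := hmono 3 (i'+3) (by omega) (by omega)
          have := hub (i'+3) (by omega)
          omega
      · -- e 2 = 3
        obtain ⟨p, hp1, hpi, hpv, hpmin⟩ := hFR 4 (by omega) i (le_refl i) (by omega)
        have hep : e p = 4 := by have := hub p hpi; omega
        have hp3 : 3 ≤ p := by
          by_contra hne
          have h1 : p ≤ 2 := by omega
          have := hmono p 2 h1 (by omega)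
          omega
        rcases Nat.lt_or_ge p 4 with h | h
        · -- p = 3
          have hpe : p = 3 := by omega
          have he4 : e 4 = 4 := by
            have := hmono 3 4 (by omega) (by omega)
            have := hub 4 (by omega)
            rw [hpe] at hep
            omega
          have := hB' 2 4 rfl (by omega)
          omega
        · -- p ≥ 4
          have h1 := hpmin (p-1) (by omega)
          have h2 := hmono 2 (p-2) (by omega) (by omega)
          have h3 := hmono (p-2) (p-1) (by omega) (by omega)
          have h4 := hB (p-2) (by omega)
          have : p - 2 + 2 = p := by omega
          rw [this] at h4
          omega
    · -- e 1 = 4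
      have := hmono 1 (i'+3) (by omega) (by omega)
      have := hub (i'+3) (by omega)
      omega

lemma blocks_bound_s14 (i : ℕ) (hi : 5 ≤ i) (A : Set ℤ)
    (hA : IsIndepSet ({1, 5, 2*i} : Finset ℕ) A) :
    ∀ (K : ℕ) (lo : ℤ), (A ∩ Set.Ico lo (lo + K*(2*(i:ℤ)+5))).ncard ≤ K * i := by
  intro K
  induction K with
  | zero => intro lo; simp
  | succ n ih =>
    intro lo
    have hm : (0:ℤ) ≤ 2*(i:ℤ)+5 := by positivity
    have hsplit : Set.Ico lo (lo + ((n:ℕ)+1:ℕ)*(2*(i:ℤ)+5))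
        = Set.Ico lo (lo + (n:ℕ)*(2*(i:ℤ)+5)) ∪
          Set.Ico (lo + (n:ℕ)*(2*(i:ℤ)+5)) (lo + (n:ℕ)*(2*(i:ℤ)+5) + (2*(i:ℤ)+5)) := by
      rw [Set.Ico_union_Ico_eq_Ico]
      · norm_num
        push_cast
        ring
      · nlinarith [Nat.cast_nonneg (α := ℤ) n]
      · omega
    rw [hsplit, Set.inter_union_distrib_left]
    calc (A ∩ Set.Ico lo (lo + (n:ℕ)*(2*(i:ℤ)+5)) ∪
          A ∩ Set.Ico (lo + (n:ℕ)*(2*(i:ℤ)+5)) (lo + (n:ℕ)*(2*(i:ℤ)+5) + (2*(i:ℤ)+5))).ncard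
        ≤ (A ∩ Set.Ico lo (lo + (n:ℕ)*(2*(i:ℤ)+5))).ncard +
          (A ∩ Set.Ico (lo + (n:ℕ)*(2*(i:ℤ)+5)) (lo + (n:ℕ)*(2*(i:ℤ)+5) + (2*(i:ℤ)+5))).ncard :=
          Set.ncard_union_le _ _
      _ ≤ n*i + i := add_le_add (ih lo) (window_bound i hi A hA _)
      _ = (n+1)*i := by ring

lemma count_upper (i : ℕ) (hi : 5 ≤ i) (A : Set ℤ)
    (hA : IsIndepSet ({1, 5, 2*i} : Finset ℕ) A) (N : ℕ) :
    (A ∩ Set.Icc (-(N:ℤ)) N).ncard ≤ (2*N/(2*i+5) + 1) * i := by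
  set K := 2*N/(2*i+5) + 1 with hK
  have hKm : 2*N+1 ≤ K*(2*i+5) := by
    have h1 := Nat.div_add_mod (2*N) (2*i+5)
    have h2 : (2*N) % (2*i+5) < 2*i+5 := Nat.mod_lt _ (by omega)
    have h3 : K*(2*i+5) = (2*i+5)*(2*N/(2*i+5)) + (2*i+5) := by ring
    omega
  have hsub : A ∩ Set.Icc (-(N:ℤ)) N ⊆ A ∩ Set.Ico (-(N:ℤ)) (-(N:ℤ) + K*(2*(i:ℤ)+5)) := by
    apply Set.inter_subset_inter_right
    intro x hx
    simp only [Set.mem_Icc] at hx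
    simp only [Set.mem_Ico]
    have hcast : (2*N+1 : ℤ) ≤ (K : ℤ)*(2*(i:ℤ)+5) := by exact_mod_cast hKm
    refine ⟨hx.1, ?_⟩
    have h4 := hx.2
    generalize (K : ℤ)*(2*(i:ℤ)+5) = Q at hcast ⊢
    omega
  calc (A ∩ Set.Icc (-(N:ℤ)) N).ncard
      ≤ (A ∩ Set.Ico (-(N:ℤ)) (-(N:ℤ) + K*(2*(i:ℤ)+5))).ncard :=
        Set.ncard_le_ncard hsub (Set.Finite.inter_of_right (Set.finite_Ico _ _) A)
    _ ≤ K * i := blocks_bound_s14 i hi A hA K _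

lemma ratio_upper (i : ℕ) (hi : 5 ≤ i) (A : Set ℤ)
    (hA : IsIndepSet ({1, 5, 2*i} : Finset ℕ) A) (N : ℕ) :
    ((A ∩ Set.Icc (-(N:ℤ)) N).ncard : ℝ) / (2*(N:ℝ)+1)
      ≤ (i:ℝ)/(2*(i:ℝ)+5) + (i:ℝ)/(2*(N:ℝ)+1) := by
  have hpos : (0:ℝ) < 2*(N:ℝ)+1 := by positivity
  have hmpos : (0:ℝ) < 2*(i:ℝ)+5 := by positivity
  have hc := count_upper i hi A hA N
  have h1 : ((A ∩ Set.Icc (-(N:ℤ)) N).ncard : ℝ) ≤ ((2*N/(2*i+5) : ℕ) + 1 : ℝ) * i := by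
    exact_mod_cast hc
  have hq : ((2*N/(2*i+5) : ℕ) : ℝ) ≤ (2*(N:ℝ))/(2*(i:ℝ)+5) := by
    have h := Nat.cast_div_le (α := ℝ) (m := 2*N) (n := 2*i+5)
    push_cast at h
    exact h
  have h2 : (2*(N:ℝ))/(2*(i:ℝ)+5) ≤ (2*(N:ℝ)+1)/(2*(i:ℝ)+5) := by gcongr <;> linarith
  calc ((A ∩ Set.Icc (-(N:ℤ)) N).ncard : ℝ) / (2*(N:ℝ)+1)
      ≤ (((2*(N:ℝ)+1)/(2*(i:ℝ)+5) + 1) * i) / (2*(N:ℝ)+1) := by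
        have hnum : ((A ∩ Set.Icc (-(N:ℤ)) N).ncard : ℝ)
            ≤ ((2*(N:ℝ)+1)/(2*(i:ℝ)+5) + 1) * i := by
          refine h1.trans (mul_le_mul_of_nonneg_right ?_ (by positivity))
          linarith
        gcongr
    _ = (i:ℝ)/(2*(i:ℝ)+5) + (i:ℝ)/(2*(N:ℝ)+1) := by
        field_simp

lemma ratio_lower (i : ℕ) (hi : 5 ≤ i) (N : ℕ) :
    (i:ℝ)/(2*(i:ℝ)+5) - (i:ℝ)/(2*(N:ℝ)+1)
      ≤ ((Aset i ∩ Set.Icc (-(N:ℤ)) N).ncard : ℝ) / (2*(N:ℝ)+1) := by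
  have hpos : (0:ℝ) < 2*(N:ℝ)+1 := by positivity
  have hmpos : (0:ℝ) < 2*(i:ℝ)+5 := by positivity
  have hc := count_lower i hi N
  set K := (2*N+1)/(2*i+5) with hK
  have hKnat : 2*N+1 < (K+1)*(2*i+5) := by
    have h1 := Nat.div_add_mod (2*N+1) (2*i+5)
    have h2 : (2*N+1) % (2*i+5) < 2*i+5 := Nat.mod_lt _ (by omega)
    have h3 : (K+1)*(2*i+5) = (2*i+5)*((2*N+1)/(2*i+5)) + (2*i+5) := by rw [hK]; ring
    rw [h3]
    omega
  have h4 : (2*(N:ℝ)+1) < ((K:ℝ)+1)*(2*(i:ℝ)+5) := by exact_mod_cast hKnat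
  have h1 : ((K:ℝ) * i) ≤ ((Aset i ∩ Set.Icc (-(N:ℤ)) N).ncard : ℝ) := by
    exact_mod_cast hc
  rw [sub_le_iff_le_add, ← add_div, div_le_div_iff₀ hmpos hpos]
  nlinarith [mul_le_mul_of_nonneg_right h1 hmpos.le,
    mul_le_mul_of_nonneg_left h4.le (show (0:ℝ) ≤ (i:ℝ) by positivity)]

lemma denom_tendsto : Tendsto (fun N : ℕ => 2*(N:ℝ)+1) atTop atTop := by
  apply Filter.tendsto_atTop_add_const_right
  exact (tendsto_natCast_atTop_atTop).const_mul_atTop (by norm_num)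

lemma err_tendsto (i : ℕ) : Tendsto (fun N : ℕ => (i:ℝ)/(2*(N:ℝ)+1)) atTop (𝓝 0) :=
  Tendsto.div_atTop tendsto_const_nhds denom_tendsto

lemma density_le (i : ℕ) (hi : 5 ≤ i) (A : Set ℤ)
    (hA : IsIndepSet ({1, 5, 2*i} : Finset ℕ) A) :
    density A ≤ (i:ℝ)/(2*(i:ℝ)+5) := by
  have hv : Tendsto (fun N : ℕ => (i:ℝ)/(2*(i:ℝ)+5) + (i:ℝ)/(2*(N:ℝ)+1)) atTop
      (𝓝 ((i:ℝ)/(2*(i:ℝ)+5))) := by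
    have := (err_tendsto i).const_add ((i:ℝ)/(2*(i:ℝ)+5))
    simpa using this
  have hveq : Filter.limsup (fun N : ℕ => (i:ℝ)/(2*(i:ℝ)+5) + (i:ℝ)/(2*(N:ℝ)+1)) atTop
      = (i:ℝ)/(2*(i:ℝ)+5) := hv.limsup_eq
  rw [density, ← hveq]
  apply Filter.limsup_le_limsup
  · exact Eventually.of_forall (fun N => ratio_upper i hi A hA N)
  · apply Filter.isCoboundedUnder_le_of_le atTop (x := 0)
    intro N
    positivity
  · apply Filter.isBoundedUnder_of
    refine ⟨(i:ℝ)/(2*(i:ℝ)+5) + i, fun N => ?_⟩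
    have h1 : (i:ℝ)/(2*(N:ℝ)+1) ≤ i := by
      apply div_le_self (by positivity)
      have : (0:ℝ) ≤ (N:ℝ) := by positivity
      linarith
    linarith

lemma density_Aset (i : ℕ) (hi : 5 ≤ i) :
    density (Aset i) = (i:ℝ)/(2*(i:ℝ)+5) := by
  have hlow : Tendsto (fun N : ℕ => (i:ℝ)/(2*(i:ℝ)+5) - (i:ℝ)/(2*(N:ℝ)+1)) atTop
      (𝓝 ((i:ℝ)/(2*(i:ℝ)+5))) := by
    have := (err_tendsto i).const_sub ((i:ℝ)/(2*(i:ℝ)+5))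
    simpa using this
  have hhigh : Tendsto (fun N : ℕ => (i:ℝ)/(2*(i:ℝ)+5) + (i:ℝ)/(2*(N:ℝ)+1)) atTop
      (𝓝 ((i:ℝ)/(2*(i:ℝ)+5))) := by
    have := (err_tendsto i).const_add ((i:ℝ)/(2*(i:ℝ)+5))
    simpa using this
  have htend : Tendsto
      (fun N : ℕ => ((Aset i ∩ Set.Icc (-(N:ℤ)) N).ncard : ℝ) / (2*(N:ℝ)+1)) atTop
      (𝓝 ((i:ℝ)/(2*(i:ℝ)+5))) := by
    apply tendsto_of_tendsto_of_tendsto_of_le_of_le hlow hhigh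
    · exact fun N => ratio_lower i hi N
    · exact fun N => ratio_upper i hi (Aset i) (Aset_indep i hi) N
  exact htend.limsup_eq

/-- For `i ≥ 5`, `ᾱ({1, 5, 2i}) = i/(2i+5)`. -/
theorem indRatio_one_five_even (i : ℕ) (hi : 5 ≤ i) :
    indRatio ({1, 5, 2 * i} : Finset ℕ) = (i : ℝ) / (2 * (i : ℝ) + 5) := by
  have hmem : (i:ℝ)/(2*(i:ℝ)+5) ∈ density '' {A : Set ℤ | IsIndepSet ({1, 5, 2*i} : Finset ℕ) A} :=
    ⟨Aset i, Aset_indep i hi, density_Aset i hi⟩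
  have hub : ∀ x ∈ density '' {A : Set ℤ | IsIndepSet ({1, 5, 2*i} : Finset ℕ) A},
      x ≤ (i:ℝ)/(2*(i:ℝ)+5) := by
    rintro x ⟨A, hA, rfl⟩
    exact density_le i hi A hA
  rw [indRatio]
  apply le_antisymm
  · exact csSup_le ⟨_, hmem⟩ hub
  · exact le_csSup ⟨_, hub⟩ hmem
end
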